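/- Let G be a finitely generated group such that the stabilizer ξ_G of the identity in Ξ_G = Aut of the colour-preserving complete Cayley graph is finite. Then there exists a finite symmetric generating set S of G such that ξ_S = ξ_G. -/

import Mathlib

open Pointwise

namespace XiAux

variable {G : Type*} [Group G]

/-- ξ_S for a set of colours S. -/
def Xi (S : Set G) : Set (Equiv.Perm G) :=
  {φ | φ 1 = 1 ∧ ∀ g : G, ∀ s ∈ S, φ (g * s) = φ g * s ∨ φ (g * s) = φ g * s⁻¹}

/-- ξ_G, the full version. -/
def XiF (G : Type*) [Group G] : Set (Equiv.Perm G) :=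
  {φ | φ 1 = 1 ∧ ∀ g h : G, φ (g * h) = φ g * h ∨ φ (g * h) = φ g * h⁻¹}

lemma XiF_subset_Xi (S : Set G) : XiF G ⊆ Xi S :=
  fun _ h => ⟨h.1, fun g s _ => h.2 g s⟩

lemma Xi_mono {S T : Set G} (h : S ⊆ T) : Xi T ⊆ Xi S :=
  fun _ hφ => ⟨hφ.1, fun g s hs => hφ.2 g s (h hs)⟩

section S0

variable {S₀ : Set G}

lemma pow_subset_succ (hone : (1:G) ∈ S₀) (n : ℕ) : S₀ ^ n ⊆ S₀ ^ (n+1) := by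
  intro x hx
  rw [pow_succ]
  exact ⟨x, hx, 1, hone, mul_one x⟩

lemma pow_mono (hone : (1:G) ∈ S₀) {m n : ℕ} (h : m ≤ n) : S₀ ^ m ⊆ S₀ ^ n := by
  induction n with
  | zero => simpa [Nat.le_zero.mp h]
  | succ n ih =>
    rcases Nat.lt_or_ge m (n+1) with h' | h'
    · exact (ih (Nat.lt_succ_iff.mp h')).trans (pow_subset_succ hone n)
    · have : m = n + 1 := le_antisymm h h'
      simp [this]

lemma inv_mem_pow (hinv : ∀ s ∈ S₀, s⁻¹ ∈ S₀) {n : ℕ} {g : G} (hg : g ∈ S₀ ^ n) :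
    g⁻¹ ∈ S₀ ^ n := by
  induction n generalizing g with
  | zero => simp_all
  | succ n ih =>
    rw [pow_succ] at hg
    obtain ⟨a, ha, b, hb, rfl⟩ := hg
    have : (a * b)⁻¹ = b⁻¹ * a⁻¹ := by group
    rw [this, pow_succ']
    exact ⟨b⁻¹, hinv b hb, a⁻¹, ih ha, rfl⟩

lemma exists_mem_pow (hinv : ∀ s ∈ S₀, s⁻¹ ∈ S₀) (hgen : Subgroup.closure S₀ = ⊤)
    (g : G) : ∃ n, g ∈ S₀ ^ n := by
  have hg : g ∈ Subgroup.closure S₀ := by rw [hgen]; trivial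
  induction hg using Subgroup.closure_induction with
  | mem x hx => exact ⟨1, by simpa using hx⟩
  | one => exact ⟨0, by simp⟩
  | mul x y _ _ hx hy =>
    obtain ⟨n, hn⟩ := hx
    obtain ⟨m, hm⟩ := hy
    exact ⟨n + m, by rw [pow_add]; exact ⟨x, hn, y, hm, rfl⟩⟩
  | inv x _ hx =>
    obtain ⟨n, hn⟩ := hx
    exact ⟨n, inv_mem_pow hinv hn⟩

lemma ball_map (hinv : ∀ s ∈ S₀, s⁻¹ ∈ S₀) {φ : Equiv.Perm G} (hφ : φ ∈ Xi S₀)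
    {n : ℕ} {g : G} (hg : g ∈ S₀ ^ n) : φ g ∈ S₀ ^ n := by
  induction n generalizing g with
  | zero =>
    have : g = 1 := by simpa using hg
    subst this
    simpa using hφ.1
  | succ n ih =>
    rw [pow_succ] at hg
    obtain ⟨a, ha, s, hs, rfl⟩ := hg
    rcases hφ.2 a s hs with h | h
    · rw [h, pow_succ]; exact ⟨φ a, ih ha, s, hs, rfl⟩
    · rw [h, pow_succ]; exact ⟨φ a, ih ha, s⁻¹, hinv s hs, rfl⟩

end S0

lemma symm_mem_XiF {ψ : Equiv.Perm G} (hψ : ψ ∈ XiF G) : ψ.symm ∈ XiF G := by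
  refine ⟨by rw [Equiv.symm_apply_eq, hψ.1], fun y t => ?_⟩
  set a := ψ.symm y with ha
  have hay : ψ a = y := ψ.apply_symm_apply y
  rcases hψ.2 a t with h1 | h1
  · left; rw [Equiv.symm_apply_eq, h1, hay]
  · rcases hψ.2 a t⁻¹ with h2 | h2
    · have hinj : a * t = a * t⁻¹ := ψ.injective (by rw [h1, h2])
      have ht : t⁻¹ = t := (mul_left_cancel hinj).symm
      left
      rw [Equiv.symm_apply_eq, h1, hay, ht]
    · right
      rw [Equiv.symm_apply_eq, h2, inv_inv, hay]

lemma trans_mem_Xi {S : Set G} {φ ψ : Equiv.Perm G} (hφ : φ ∈ Xi S) (hψ : ψ ∈ XiF G) :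
    φ.trans ψ.symm ∈ Xi S := by
  have hsymm := symm_mem_XiF hψ
  refine ⟨by simp [hφ.1, Equiv.symm_apply_eq, hψ.1], fun g s hs => ?_⟩
  simp only [Equiv.trans_apply]
  rcases hφ.2 g s hs with h | h
  · rw [h]
    exact hsymm.2 (φ g) s
  · rw [h]
    rcases hsymm.2 (φ g) s⁻¹ with h' | h'
    · right; rw [h']
    · left; rw [h', inv_inv]

/-- Conjugating by a left translation. -/
def transl (σ : Equiv.Perm G) (h : G) : Equiv.Perm G :=
  (Equiv.mulLeft h).trans (σ.trans (Equiv.mulLeft (σ h)⁻¹))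

lemma transl_apply (σ : Equiv.Perm G) (h x : G) :
    transl σ h x = (σ h)⁻¹ * σ (h * x) := rfl

lemma transl_mem_Xi {S : Set G} {σ : Equiv.Perm G} (hσ : σ ∈ Xi S) (h : G) :
    transl σ h ∈ Xi S := by
  refine ⟨by simp [transl_apply], fun g s hs => ?_⟩
  simp only [transl_apply]
  rcases hσ.2 (h * g) s hs with h' | h'
  · left; rw [← mul_assoc h g s, h', mul_assoc]
  · right; rw [← mul_assoc h g s, h', mul_assoc]

section Ultra

variable (U : Ultrafilter ℕ)

lemma pigeon {β : Type*} (f : ℕ → β) (T : Finset β) (h : {N | f N ∈ T} ∈ U) :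
    ∃ v ∈ T, {N | f N = v} ∈ U := by
  classical
  induction T using Finset.induction_on with
  | empty =>
    exfalso
    have : {N | f N ∈ (∅ : Finset β)} = (∅ : Set ℕ) := by simp
    rw [this] at h
    exact Ultrafilter.empty_notMem h
  | @insert a T ha ih =>
    have hsplit : {N | f N ∈ insert a T} = {N | f N = a} ∪ {N | f N ∈ T} := by
      ext N; simp [Finset.mem_insert]
    rw [hsplit] at h
    rcases Ultrafilter.union_mem_iff.mp h with h' | h'
    · exact ⟨a, Finset.mem_insert_self a T, h'⟩
    · obtain ⟨v, hv, hv'⟩ := ih h'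
      exact ⟨v, Finset.mem_insert_of_mem hv, hv'⟩

lemma ultra_eq {β : Type*} {f : ℕ → β} {v w : β}
    (hv : {N | f N = v} ∈ U) (hw : {N | f N = w} ∈ U) : v = w := by
  obtain ⟨N, hN1, hN2⟩ := Ultrafilter.nonempty_of_mem (Filter.inter_mem hv hw)
  exact hN1.symm.trans hN2

end Ultra

section Limit

variable {S₀ : Set G} (hone : (1:G) ∈ S₀) (hinv : ∀ s ∈ S₀, s⁻¹ ∈ S₀)
  (hfinS : S₀.Finite) (hgen : Subgroup.closure S₀ = ⊤)
  (U : Ultrafilter ℕ) (hU : ↑U ≤ (Filter.atTop : Filter ℕ))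

include hone hinv hfinS hgen hU in
lemma limit (τ : ℕ → Equiv.Perm G) (hτ : ∀ N, τ N ∈ Xi (S₀ ^ (N+1))) :
    ∃ ω ∈ XiF G, ∀ g : G, {N | τ N g = ω g} ∈ U := by
  classical
  have hfinpow : ∀ n : ℕ, (S₀ ^ n).Finite := by
    intro n
    induction n with
    | zero => simpa using Set.finite_one
    | succ n ih => rw [pow_succ]; exact ih.mul hfinS
  have hτ1 : ∀ N, τ N ∈ Xi S₀ := by
    intro N
    have hsub : S₀ ⊆ S₀ ^ (N+1) := by
      have := pow_mono hone (Nat.le_add_left 1 N)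
      simpa using this
    exact Xi_mono hsub (hτ N)
  have key : ∀ g : G, ∃ v : G, {N | τ N g = v} ∈ U := by
    intro g
    obtain ⟨n, hn⟩ := exists_mem_pow hinv hgen g
    have hmem : {N | τ N g ∈ (hfinpow n).toFinset} ∈ U := by
      have : {N | τ N g ∈ (hfinpow n).toFinset} = Set.univ := by
        ext N
        simp [Set.Finite.mem_toFinset, ball_map hinv (hτ1 N) hn]
      rw [this]
      exact Filter.univ_mem
    obtain ⟨v, _, hv⟩ := pigeon U _ _ hmem
    exact ⟨v, hv⟩
  choose F hF using key
  -- basic facts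
  have hone' : F 1 = 1 := by
    refine ultra_eq U (hF 1) ?_
    have : {N | τ N (1:G) = 1} = Set.univ := by
      ext N; simp [(hτ N).1]
    rw [this]; exact Filter.univ_mem
  have hpair : ∀ a b : G, F (a * b) = F a * b ∨ F (a * b) = F a * b⁻¹ := by
    intro a b
    obtain ⟨n, hn⟩ := exists_mem_pow hinv hgen b
    have htail : {N | n ≤ N + 1} ∈ U := by
      apply hU
      have : {N : ℕ | n ≤ N} ⊆ {N | n ≤ N + 1} := fun N hN => le_trans hN (Nat.le_succ N)
      exact Filter.mem_of_superset (Filter.mem_atTop n) this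
    have hint := Filter.inter_mem (Filter.inter_mem (hF (a*b)) (hF a)) htail
    obtain ⟨N, ⟨hN1, hN2⟩, hN3⟩ := Ultrafilter.nonempty_of_mem hint
    have hbmem : b ∈ S₀ ^ (N+1) := pow_mono hone hN3 hn
    rcases (hτ N).2 a b hbmem with h | h
    · left; rw [← hN1, ← hN2, h]
    · right; rw [← hN1, ← hN2, h]
  have hinj : Function.Injective F := by
    intro a b hab
    by_contra hne
    obtain ⟨N, hN1, hN2⟩ := Ultrafilter.nonempty_of_mem (Filter.inter_mem (hF a) (hF b))
    exact hne ((τ N).injective (by rw [hN1, hN2, hab]))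
  have hsign : ∀ g : G, F g = g ∨ F g = g⁻¹ := by
    intro g
    have := hpair 1 g
    rwa [one_mul, hone', one_mul, one_mul] at this
  have hsurj : Function.Surjective F := by
    intro y
    obtain ⟨n, hn⟩ := exists_mem_pow hinv hgen y
    have hmaps : ∀ g ∈ (hfinpow n).toFinset, F g ∈ (hfinpow n).toFinset := by
      intro g hg
      rw [Set.Finite.mem_toFinset] at *
      rcases hsign g with h | h
      · rwa [h]
      · rw [h]; exact inv_mem_pow hinv hg
    have himg : Finset.image F (hfinpow n).toFinset = (hfinpow n).toFinset := by
      apply Finset.eq_of_subset_of_card_le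
      · intro v hv
        obtain ⟨g, hg, rfl⟩ := Finset.mem_image.mp hv
        exact hmaps g hg
      · rw [Finset.card_image_of_injOn (Set.injOn_of_injective hinj)]
    have hy : y ∈ Finset.image F (hfinpow n).toFinset := by
      rw [himg, Set.Finite.mem_toFinset]; exact hn
    obtain ⟨g, _, hg⟩ := Finset.mem_image.mp hy
    exact ⟨g, hg⟩
  refine ⟨Equiv.ofBijective F ⟨hinj, hsurj⟩, ⟨?_, ?_⟩, ?_⟩
  · exact hone'
  · intro a b
    exact hpair a b
  · intro g
    exact hF g

end Limit

lemma pow_finite {S₀ : Set G} (hfinS : S₀.Finite) (n : ℕ) : (S₀ ^ n).Finite := by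
  induction n with
  | zero => simpa using Set.finite_one
  | succ n ih => rw [pow_succ]; exact ih.mul hfinS

section Germ

variable {S₀ : Set G} (hone : (1:G) ∈ S₀) (hinv : ∀ s ∈ S₀, s⁻¹ ∈ S₀)
  (hfinS : S₀.Finite) (hgen : Subgroup.closure S₀ = ⊤)
  (U : Ultrafilter ℕ) (hU : ↑U ≤ (Filter.atTop : Filter ℕ))

include hone hinv hfinS hgen hU in
lemma germ_approx (k : ℕ) :
    ∃ N₁ : ℕ, ∀ φ ∈ Xi (S₀ ^ (N₁+1)), ∃ ψ ∈ XiF G, ∀ g ∈ S₀ ^ k, φ g = ψ g := by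
  classical
  by_contra hc
  push_neg at hc
  choose φ hφ hbad using hc
  obtain ⟨ω, hω, hE⟩ := limit hone hinv hfinS hgen U hU φ hφ
  have hfink : (S₀ ^ k).Finite := pow_finite hfinS k
  have hbig : (⋂ g ∈ hfink.toFinset, {N | φ N g = ω g}) ∈ U :=
    (Filter.biInter_finset_mem _).2 (fun g _ => hE g)
  obtain ⟨N, hN⟩ := Ultrafilter.nonempty_of_mem hbig
  obtain ⟨g, hg, hne⟩ := hbad N ω hω
  exact hne (Set.mem_iInter₂.mp hN g (hfink.mem_toFinset.2 hg))

end Germ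

end XiAux

open XiAux

/-- If `G` is finitely generated and the stabilizer `ξ_G` of the identity in the
colour-preserving automorphism group of the complete Cayley graph is finite, then
there is a finite symmetric generating set `S` with `ξ_S = ξ_G`. -/
theorem exists_finite_genset_xi_eq {G : Type*} [Group G] (hfg : Group.FG G)
    (hfin : {φ : Equiv.Perm G | φ 1 = 1 ∧
      ∀ g h : G, φ (g * h) = φ g * h ∨ φ (g * h) = φ g * h⁻¹}.Finite) :
    ∃ S : Finset G, (∀ s ∈ S, s⁻¹ ∈ S) ∧ Subgroup.closure (S : Set G) = ⊤ ∧
      {φ : Equiv.Perm G | φ 1 = 1 ∧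
          ∀ g : G, ∀ s ∈ S, φ (g * s) = φ g * s ∨ φ (g * s) = φ g * s⁻¹}
        = {φ : Equiv.Perm G | φ 1 = 1 ∧
            ∀ g h : G, φ (g * h) = φ g * h ∨ φ (g * h) = φ g * h⁻¹} := by
  classical
  have hfinXiF : (XiF G).Finite := hfin
  obtain ⟨T, hT⟩ := hfg.out
  set S₀ : Set G := (↑T : Set G) ∪ (↑T : Set G)⁻¹ ∪ {1} with hS₀def
  have hone : (1:G) ∈ S₀ := by simp [hS₀def]
  have hinvS : ∀ s ∈ S₀, s⁻¹ ∈ S₀ := by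
    intro s hs
    simp only [hS₀def, Set.mem_union, Set.mem_inv, Set.mem_singleton_iff] at hs ⊢
    rcases hs with (hs | hs) | hs
    · exact Or.inl (Or.inr (by simpa using hs))
    · exact Or.inl (Or.inl hs)
    · subst hs; simp
  have hfinS : S₀.Finite :=
    (T.finite_toSet.union T.finite_toSet.inv).union (Set.finite_singleton 1)
  have hgen : Subgroup.closure S₀ = ⊤ := by
    rw [eq_top_iff, ← hT]
    exact Subgroup.closure_mono (fun x hx => Or.inl (Or.inl hx))
  set U : Ultrafilter ℕ := Ultrafilter.of Filter.atTop with hUdef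
  have hU : ↑U ≤ (Filter.atTop : Filter ℕ) := Ultrafilter.of_le _
  -- the critical radius k : any element of ξ_G fixing S₀^k pointwise is the identity
  have hd : ∀ ψ : Equiv.Perm G, ψ ≠ 1 → ∃ n, ∃ g ∈ S₀ ^ n, ψ g ≠ g := by
    intro ψ hne
    have hex : ∃ g, ψ g ≠ g := by
      by_contra hfix; push_neg at hfix
      exact hne (Equiv.ext fun g => by simpa using hfix g)
    obtain ⟨g, hg⟩ := hex
    obtain ⟨n, hn⟩ := exists_mem_pow hinvS hgen g
    exact ⟨n, g, hn, hg⟩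
  set P : Equiv.Perm G → ℕ :=
    fun ψ => if h : ∃ n, ∃ g ∈ S₀ ^ n, ψ g ≠ g then h.choose else 0 with hPdef
  set k := hfinXiF.toFinset.sup P with hkdef
  have hkey : ∀ ψ ∈ XiF G, (∀ g ∈ S₀ ^ k, ψ g = g) → ψ = 1 := by
    intro ψ hψ hfix
    by_contra hne
    obtain hex := hd ψ hne
    obtain ⟨g, hgmem, hgne⟩ := hex.choose_spec
    have hP : P ψ = hex.choose := by simp only [hPdef]; rw [dif_pos hex]
    have hle : P ψ ≤ k := hkdef ▸ Finset.le_sup (hfinXiF.mem_toFinset.2 hψ)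
    have hgk : g ∈ S₀ ^ k := pow_mono hone (hP ▸ hle) hgmem
    exact hgne (hfix g hgk)
  by_contra hcon
  push_neg at hcon
  -- for every N there is an element of ξ_{S₀^(N+1)} that is not in ξ_G
  have hbadN : ∀ N : ℕ, ∃ φ, φ ∈ Xi (S₀ ^ (N+1)) ∧ φ ∉ XiF G := by
    intro N
    have hSN := pow_finite hfinS (N+1)
    have hsym : ∀ s ∈ hSN.toFinset, s⁻¹ ∈ hSN.toFinset := by
      intro s hs
      rw [Set.Finite.mem_toFinset] at *
      exact inv_mem_pow hinvS hs
    have hgenN : Subgroup.closure (↑hSN.toFinset : Set G) = ⊤ := by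
      rw [Set.Finite.coe_toFinset, eq_top_iff, ← hgen]
      apply Subgroup.closure_mono
      have := pow_mono hone (Nat.le_add_left 1 N)
      simpa using this
    have hne := hcon hSN.toFinset hsym hgenN
    have hsetid : {φ : Equiv.Perm G | φ 1 = 1 ∧
        ∀ g : G, ∀ s ∈ hSN.toFinset, φ (g * s) = φ g * s ∨ φ (g * s) = φ g * s⁻¹}
        = Xi (S₀ ^ (N+1)) := by
      ext φ
      simp only [Xi, Set.mem_setOf_eq, Set.Finite.mem_toFinset]
    rw [hsetid] at hne
    by_contra hno
    push_neg at hno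
    exact hne (le_antisymm (fun φ hφ => hno φ hφ) (XiF_subset_Xi _))
  obtain ⟨N₁, hN₁⟩ := germ_approx hone hinvS hfinS hgen U hU k
  -- for every N, an element of ξ_{S₀^(N+1)} fixing S₀^k pointwise but moving a
  -- point of S₀^(k+1)
  have hstep : ∀ N : ℕ, ∃ τ : Equiv.Perm G, τ ∈ Xi (S₀ ^ (N+1)) ∧
      (∀ g ∈ S₀ ^ k, τ g = g) ∧ ∃ x, x ∈ S₀ ^ (k+1) ∧ τ x ≠ x := by
    intro N
    obtain ⟨φ, hφ, hφn⟩ := hbadN (max N N₁)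
    have hφ1 : φ ∈ Xi (S₀ ^ (N₁+1)) := Xi_mono (pow_mono hone (by omega)) hφ
    obtain ⟨ψ, hψ, hagree⟩ := hN₁ φ hφ1
    set σ := φ.trans ψ.symm with hσdef
    have hσ : σ ∈ Xi (S₀ ^ (max N N₁ + 1)) := trans_mem_Xi hφ hψ
    have hσfix : ∀ g ∈ S₀ ^ k, σ g = g := by
      intro g hg
      simp [hσdef, Equiv.trans_apply, hagree g hg]
    have hσne : σ ≠ 1 := by
      intro h1
      apply hφn
      have hφψ : φ = ψ := by
        apply Equiv.ext
        intro y
        have hy : σ y = y := by rw [h1]; simp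
        have hy' : ψ.symm (φ y) = y := hy
        rwa [Equiv.symm_apply_eq] at hy'
      rwa [hφψ]
    have hexd : ∃ n, ∃ g ∈ S₀ ^ n, σ g ≠ g := hd σ hσne
    set d := Nat.find hexd with hddef
    obtain ⟨gstar, hgmem, hgne⟩ := Nat.find_spec hexd
    have hdk : k + 1 ≤ d := by
      by_contra hlt
      push_neg at hlt
      exact hgne (hσfix gstar (pow_mono hone (by omega) hgmem))
    have hfixm : ∀ g ∈ S₀ ^ (d-1), σ g = g := by
      intro g hg
      by_contra hne2
      exact Nat.find_min hexd (by omega) ⟨g, hg, hne2⟩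
    have hsplit : gstar ∈ S₀ ^ ((d-1-k) + (k+1)) := by
      have he : (d-1-k) + (k+1) = d := by omega
      rwa [he]
    rw [pow_add] at hsplit
    obtain ⟨h, hh, x, hxmem, hmul0⟩ := hsplit
    have hmul : h * x = gstar := hmul0
    have hσh : σ h = h := hfixm h (pow_mono hone (by omega) hh)
    refine ⟨transl σ h, Xi_mono (pow_mono hone (by omega)) (transl_mem_Xi hσ h), ?_, ?_⟩
    · intro z hz
      have hz' : h * z ∈ S₀ ^ (d-1) := by
        have hmem : h * z ∈ S₀ ^ ((d-1-k) + k) := by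
          rw [pow_add]; exact ⟨h, hh, z, hz, rfl⟩
        have he : (d-1-k) + k = d-1 := by omega
        rwa [he] at hmem
      rw [transl_apply, hσh, hfixm _ hz', inv_mul_cancel_left]
    · refine ⟨x, hxmem, ?_⟩
      rw [transl_apply, hσh, hmul]
      intro hcontra
      apply hgne
      have hgg : σ gstar = h * x := by rw [← hcontra, mul_inv_cancel_left]
      rw [hgg, hmul]
  choose τ hτ hfix hdev using hstep
  choose x hxmem hxne using hdev
  obtain ⟨ω, hω, hE⟩ := limit hone hinvS hfinS hgen U hU τ hτ
  have hωfix : ∀ g ∈ S₀ ^ k, ω g = g := by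
    intro g hg
    refine ultra_eq U (hE g) ?_
    have huniv : {N | τ N g = g} = Set.univ := by
      ext N; simp [hfix N g hg]
    rw [huniv]; exact Filter.univ_mem
  have hω1 : ω = 1 := hkey ω hω hωfix
  have hxball : {N | x N ∈ (pow_finite hfinS (k+1)).toFinset} ∈ U := by
    have huniv : {N | x N ∈ (pow_finite hfinS (k+1)).toFinset} = Set.univ := by
      ext N; simp [Set.Finite.mem_toFinset, hxmem N]
    rw [huniv]; exact Filter.univ_mem
  obtain ⟨xs, _, hxs⟩ := pigeon U x _ hxball
  obtain ⟨N, hN1, hN2⟩ := Ultrafilter.nonempty_of_mem (Filter.inter_mem (hE xs) hxs)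
  exact hxne N (by rw [hN2, hN1, hω1]; simp)
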